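/- Let ℓ, d_Q, d_V be positive integers, M a fixed real ℓ×ℓ mask matrix, and F(q, k, v) = softmax((1/d_Q)·q·kᵀ + M)·v functional attention with row-wise softmax. If ‖q‖_{∞RMS} ≤ 1, ‖k‖_{∞RMS} ≤ 1, and ‖v‖_{∞RMS} ≤ 1, then for every perturbation (Δq, Δk, Δv), ‖∇F(q,k,v)·(Δq, Δk, Δv)‖_{∞RMS} ≤ ‖Δq‖_{∞RMS} + ‖Δk‖_{∞RMS} + ‖Δv‖_{∞RMS}; that is, functional attention with 1/d_Q scaling is 1-Lipschitz (with respect to the sum of the input perturbation norms) when all input norms are at most 1. -/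

import Mathlib

open Matrix

attribute [local instance] Matrix.normedAddCommGroup Matrix.normedSpace

/-- The `∞RMS` norm of `x ∈ ℝ^{ℓ×d}`: the maximum over rows (token positions)
of the RMS norm `sqrt((1/d)·Σ_j x_{ij}²)` of the corresponding row. -/
noncomputable def infRMS {l d : ℕ} (x : Matrix (Fin l) (Fin d) ℝ) : ℝ :=
  ⨆ i : Fin l, Real.sqrt ((1 / (d : ℝ)) * ∑ j, x i j ^ 2)

/-- Row-wise softmax: `softmax(z)_{im} = exp(z_{im}) / Σ_{m'} exp(z_{im'})`. -/
noncomputable def softmaxRows {l m : ℕ} (z : Matrix (Fin l) (Fin m) ℝ) :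
    Matrix (Fin l) (Fin m) ℝ :=
  Matrix.of fun i j => Real.exp (z i j) / ∑ j', Real.exp (z i j')

/-- Functional attention with `1/d_Q` scaling:
`F(q, k, v) = softmax((1/d_Q)·q·kᵀ + M)·v`. -/
noncomputable def attnF {l dQ dV : ℕ} (M : Matrix (Fin l) (Fin l) ℝ)
    (qkv : Matrix (Fin l) (Fin dQ) ℝ × Matrix (Fin l) (Fin dQ) ℝ ×
      Matrix (Fin l) (Fin dV) ℝ) : Matrix (Fin l) (Fin dV) ℝ :=
  softmaxRows ((1 / (dQ : ℝ)) • (qkv.1 * qkv.2.1ᵀ) + M) * qkv.2.2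

/-! ### Auxiliary definitions for the derivative formula -/

section scalars
variable {l dQ dV : ℕ} (M : Matrix (Fin l) (Fin l) ℝ)
  (q k : Matrix (Fin l) (Fin dQ) ℝ) (v : Matrix (Fin l) (Fin dV) ℝ)
  (Δq Δk : Matrix (Fin l) (Fin dQ) ℝ) (Δv : Matrix (Fin l) (Fin dV) ℝ)

noncomputable def Sv (i m : Fin l) : ℝ := (1 / (dQ:ℝ)) * ∑ t, q i t * k m t + M i m

noncomputable def Sd (i m : Fin l) : ℝ :=
  (1 / (dQ:ℝ)) * ∑ t, (Δq i t * k m t + q i t * Δk m t)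

noncomputable def Aw (i m : Fin l) : ℝ :=
  Real.exp (Sv M q k i m) / ∑ m', Real.exp (Sv M q k i m')

noncomputable def Gd (i : Fin l) (j : Fin dV) : ℝ :=
  ∑ m, (Aw M q k i m * (Sd q k Δq Δk i m - ∑ m', Aw M q k i m' * Sd q k Δq Δk i m') * v m j
    + Aw M q k i m * Δv m j)
end scalars

/-! ### Calculus lemmas -/

lemma attnF_apply {l dQ dV : ℕ} (M : Matrix (Fin l) (Fin l) ℝ)
    (x : Matrix (Fin l) (Fin dQ) ℝ × Matrix (Fin l) (Fin dQ) ℝ ×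
      Matrix (Fin l) (Fin dV) ℝ) (i : Fin l) (j : Fin dV) :
    attnF M x i j =
      ∑ m, (Real.exp ((1 / (dQ:ℝ)) * ∑ t, x.1 i t * x.2.1 m t + M i m) /
        ∑ m', Real.exp ((1 / (dQ:ℝ)) * ∑ t, x.1 i t * x.2.1 m' t + M i m')) * x.2.2 m j := by
  simp [attnF, softmaxRows, Matrix.mul_apply, Matrix.transpose_apply, Finset.mul_sum]

lemma diff_entry {l d : ℕ} (i : Fin l) (t : Fin d) :
    Differentiable ℝ (fun y : Matrix (Fin l) (Fin d) ℝ => y i t) := by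
  intro y
  exact ((differentiableAt_pi).mp (((differentiableAt_pi).mp differentiableAt_id) i)) t

lemma diffat_pi_matrix {E : Type*} [NormedAddCommGroup E] [NormedSpace ℝ E]
    {l d : ℕ} {f : E → Matrix (Fin l) (Fin d) ℝ} {x : E}
    (h : ∀ i j, DifferentiableAt ℝ (fun x => f x i j) x) : DifferentiableAt ℝ f x :=
  differentiableAt_pi.mpr fun i => differentiableAt_pi.mpr fun j => h i j

lemma hasDerivAt_entry {l d : ℕ} {f : ℝ → Matrix (Fin l) (Fin d) ℝ}
    {f' : Matrix (Fin l) (Fin d) ℝ} {x : ℝ} (h : HasDerivAt f f' x) (i : Fin l) (j : Fin d) :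
    HasDerivAt (fun t => f t i j) (f' i j) x :=
  hasDerivAt_pi.mp (hasDerivAt_pi.mp h i) j

lemma attnF_diff {l dQ dV : ℕ} (hl : 0 < l) (M : Matrix (Fin l) (Fin l) ℝ)
    (p : Matrix (Fin l) (Fin dQ) ℝ × Matrix (Fin l) (Fin dQ) ℝ × Matrix (Fin l) (Fin dV) ℝ) :
    DifferentiableAt ℝ (attnF M) p := by
  have : Nonempty (Fin l) := ⟨⟨0, hl⟩⟩
  apply diffat_pi_matrix
  intro i j
  have hS : ∀ m : Fin l, DifferentiableAt ℝ
      (fun x : Matrix (Fin l) (Fin dQ) ℝ × Matrix (Fin l) (Fin dQ) ℝ ×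
        Matrix (Fin l) (Fin dV) ℝ =>
        (1 / (dQ:ℝ)) * ∑ t, x.1 i t * x.2.1 m t + M i m) p := by
    intro m
    refine DifferentiableAt.add_const _ ?_
    refine DifferentiableAt.const_mul ?_ _
    refine DifferentiableAt.fun_sum (fun t _ => ?_)
    exact (((diff_entry i t) p.1).comp p differentiableAt_fst).fun_mul
      (((diff_entry m t) p.2.1).comp p (differentiableAt_fst.comp p differentiableAt_snd))
  have hD : DifferentiableAt ℝ
      (fun x : Matrix (Fin l) (Fin dQ) ℝ × Matrix (Fin l) (Fin dQ) ℝ ×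
        Matrix (Fin l) (Fin dV) ℝ =>
        ∑ m', Real.exp ((1 / (dQ:ℝ)) * ∑ t, x.1 i t * x.2.1 m' t + M i m')) p :=
    DifferentiableAt.fun_sum (fun m _ => (hS m).exp)
  have hDne : (∑ m', Real.exp ((1 / (dQ:ℝ)) * ∑ t, p.1 i t * p.2.1 m' t + M i m')) ≠ 0 :=
    ne_of_gt (Finset.sum_pos (fun m _ => Real.exp_pos _) Finset.univ_nonempty)
  have : DifferentiableAt ℝ
      (fun x : Matrix (Fin l) (Fin dQ) ℝ × Matrix (Fin l) (Fin dQ) ℝ ×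
        Matrix (Fin l) (Fin dV) ℝ =>
        ∑ m, (Real.exp ((1 / (dQ:ℝ)) * ∑ t, x.1 i t * x.2.1 m t + M i m) /
          ∑ m', Real.exp ((1 / (dQ:ℝ)) * ∑ t, x.1 i t * x.2.1 m' t + M i m')) * x.2.2 m j) p := by
    refine DifferentiableAt.fun_sum (fun m _ => DifferentiableAt.fun_mul ?_ ?_)
    · have h1 : DifferentiableAt ℝ
        (fun x : Matrix (Fin l) (Fin dQ) ℝ × Matrix (Fin l) (Fin dQ) ℝ ×
          Matrix (Fin l) (Fin dV) ℝ =>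
          Real.exp ((1 / (dQ:ℝ)) * ∑ t, x.1 i t * x.2.1 m t + M i m)) p := (hS m).exp
      simp only [div_eq_mul_inv]
      exact h1.fun_mul (hD.fun_inv hDne)
    · exact (((diff_entry m j) p.2.2).comp p (differentiableAt_snd.comp p differentiableAt_snd))
  exact this.congr_of_eventuallyEq (by filter_upwards with x; rw [attnF_apply])

lemma haff (a b : ℝ) : HasDerivAt (fun τ : ℝ => a + τ * b) b 0 := by
  simpa using ((hasDerivAt_id (0:ℝ)).mul_const b).const_add a

lemma alg_step (E S D W u w : ℝ) (hD : D ≠ 0) :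
    (E * S * D - E * W) / D ^ 2 * u + E / D * w =
      E / D * (S - W / D) * u + E / D * w := by
  field_simp

lemma entry_hasDerivAt {l dQ dV : ℕ} (M : Matrix (Fin l) (Fin l) ℝ)
    (q k : Matrix (Fin l) (Fin dQ) ℝ) (v : Matrix (Fin l) (Fin dV) ℝ)
    (Δq Δk : Matrix (Fin l) (Fin dQ) ℝ) (Δv : Matrix (Fin l) (Fin dV) ℝ)
    (hl : 0 < l) (i : Fin l) (j : Fin dV) :
    HasDerivAt (fun τ : ℝ => attnF M ((q, k, v) + τ • (Δq, Δk, Δv)) i j)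
      (Gd M q k v Δq Δk Δv i j) 0 := by
  have : Nonempty (Fin l) := ⟨⟨0, hl⟩⟩
  have hDne : (∑ m', Real.exp (Sv M q k i m')) ≠ 0 :=
    ne_of_gt (Finset.sum_pos (fun m _ => Real.exp_pos _) Finset.univ_nonempty)
  have hfun : (fun τ : ℝ => attnF M ((q, k, v) + τ • (Δq, Δk, Δv)) i j) =
      fun τ => ∑ m,
        (Real.exp ((1 / (dQ:ℝ)) * ∑ t, (q i t + τ * Δq i t) * (k m t + τ * Δk m t) + M i m) /
          ∑ m', Real.exp ((1 / (dQ:ℝ)) * ∑ t, (q i t + τ * Δq i t) * (k m' t + τ * Δk m' t) + M i m')) *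
          (v m j + τ * Δv m j) := by
    funext τ
    rw [attnF_apply]
    rfl
  rw [hfun]
  have hs : ∀ m : Fin l, HasDerivAt
      (fun τ : ℝ => (1 / (dQ:ℝ)) * ∑ t, (q i t + τ * Δq i t) * (k m t + τ * Δk m t) + M i m)
      (Sd q k Δq Δk i m) 0 := by
    intro m
    have hterm : ∀ t : Fin dQ, HasDerivAt
        (fun τ : ℝ => (q i t + τ * Δq i t) * (k m t + τ * Δk m t))
        (Δq i t * k m t + q i t * Δk m t) 0 := by
      intro t
      simpa using (haff (q i t) (Δq i t)).fun_mul (haff (k m t) (Δk m t))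
    exact (((HasDerivAt.fun_sum (fun t _ => hterm t)).const_mul _).add_const _)
  have hexp : ∀ m : Fin l, HasDerivAt
      (fun τ : ℝ => Real.exp ((1 / (dQ:ℝ)) * ∑ t, (q i t + τ * Δq i t) * (k m t + τ * Δk m t) + M i m))
      (Real.exp (Sv M q k i m) * Sd q k Δq Δk i m) 0 := by
    intro m
    have := (hs m).exp
    simpa [Sv] using this
  have hD : HasDerivAt
      (fun τ : ℝ => ∑ m', Real.exp ((1 / (dQ:ℝ)) * ∑ t, (q i t + τ * Δq i t) * (k m' t + τ * Δk m' t) + M i m'))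
      (∑ m', Real.exp (Sv M q k i m') * Sd q k Δq Δk i m') 0 :=
    HasDerivAt.fun_sum (fun m' _ => hexp m')
  have hdiv : ∀ m : Fin l, HasDerivAt
      (fun τ : ℝ => Real.exp ((1 / (dQ:ℝ)) * ∑ t, (q i t + τ * Δq i t) * (k m t + τ * Δk m t) + M i m) /
        ∑ m', Real.exp ((1 / (dQ:ℝ)) * ∑ t, (q i t + τ * Δq i t) * (k m' t + τ * Δk m' t) + M i m'))
      ((Real.exp (Sv M q k i m) * Sd q k Δq Δk i m * (∑ m', Real.exp (Sv M q k i m')) -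
        Real.exp (Sv M q k i m) * ∑ m', Real.exp (Sv M q k i m') * Sd q k Δq Δk i m') /
        (∑ m', Real.exp (Sv M q k i m')) ^ 2) 0 := by
    intro m
    have hne : (fun τ : ℝ => ∑ m', Real.exp ((1 / (dQ:ℝ)) * ∑ t, (q i t + τ * Δq i t) * (k m' t + τ * Δk m' t) + M i m')) 0 ≠ 0 := by
      simp only []
      exact ne_of_gt (Finset.sum_pos (fun _ _ => Real.exp_pos _) Finset.univ_nonempty)
    have := (hexp m).fun_div hD hne
    simpa [Sv] using this
  have hterm : ∀ m : Fin l, HasDerivAt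
      (fun τ : ℝ =>
        (Real.exp ((1 / (dQ:ℝ)) * ∑ t, (q i t + τ * Δq i t) * (k m t + τ * Δk m t) + M i m) /
          ∑ m', Real.exp ((1 / (dQ:ℝ)) * ∑ t, (q i t + τ * Δq i t) * (k m' t + τ * Δk m' t) + M i m')) *
          (v m j + τ * Δv m j))
      ((Real.exp (Sv M q k i m) * Sd q k Δq Δk i m * (∑ m', Real.exp (Sv M q k i m')) -
        Real.exp (Sv M q k i m) * ∑ m', Real.exp (Sv M q k i m') * Sd q k Δq Δk i m') /
        (∑ m', Real.exp (Sv M q k i m')) ^ 2 * v m j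
        + Real.exp (Sv M q k i m) / (∑ m', Real.exp (Sv M q k i m')) * Δv m j) 0 := by
    intro m
    have := (hdiv m).fun_mul (haff (v m j) (Δv m j))
    simpa [Sv] using this
  have hsum := HasDerivAt.fun_sum (fun m (_ : m ∈ Finset.univ) => hterm m)
  refine hsum.congr_deriv ?_
  symm
  unfold Gd
  apply Finset.sum_congr rfl
  intro m _
  have h1 : (∑ m', Aw M q k i m' * Sd q k Δq Δk i m') =
      (∑ m', Real.exp (Sv M q k i m') * Sd q k Δq Δk i m') / (∑ m', Real.exp (Sv M q k i m')) := by
    rw [Finset.sum_div]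
    exact Finset.sum_congr rfl (fun m' _ => by unfold Aw; ring)
  rw [h1]
  unfold Aw
  exact (alg_step _ _ _ _ _ _ hDne).symm

lemma fderiv_attnF_apply {l dQ dV : ℕ} (hl : 0 < l) (M : Matrix (Fin l) (Fin l) ℝ)
    (q k : Matrix (Fin l) (Fin dQ) ℝ) (v : Matrix (Fin l) (Fin dV) ℝ)
    (Δq Δk : Matrix (Fin l) (Fin dQ) ℝ) (Δv : Matrix (Fin l) (Fin dV) ℝ)
    (i : Fin l) (j : Fin dV) :
    fderiv ℝ (attnF M) (q, k, v) (Δq, Δk, Δv) i j = Gd M q k v Δq Δk Δv i j := by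
  have hdiff := attnF_diff hl M (q, k, v)
  have hline : HasDerivAt (fun τ : ℝ => (q, k, v) + τ • (Δq, Δk, Δv)) (Δq, Δk, Δv) 0 := by
    exact (((hasDerivAt_id (0:ℝ)).smul_const (Δq, Δk, Δv)).const_add (q, k, v)).congr_deriv (one_smul _ _)
  have h0 : (q, k, v) + (0:ℝ) • (Δq, Δk, Δv) = (q, k, v) := by simp
  have hF : HasDerivAt (fun τ : ℝ => attnF M ((q, k, v) + τ • (Δq, Δk, Δv)))
      (fderiv ℝ (attnF M) (q, k, v) (Δq, Δk, Δv)) 0 := by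
    have hfd : HasFDerivAt (attnF M) (fderiv ℝ (attnF M) (q, k, v))
        ((fun τ : ℝ => (q, k, v) + τ • (Δq, Δk, Δv)) 0) := by
      rw [show (fun τ : ℝ => (q, k, v) + τ • (Δq, Δk, Δv)) 0 = (q, k, v) from h0]
      exact hdiff.hasFDerivAt
    exact hfd.comp_hasDerivAt 0 hline
  exact (hasDerivAt_entry hF i j).unique (entry_hasDerivAt M q k v Δq Δk Δv hl i j)
lemma row_le_infRMS {l d : ℕ} (x : Matrix (Fin l) (Fin d) ℝ) (i : Fin l) :
    Real.sqrt ((1 / (d : ℝ)) * ∑ j, x i j ^ 2) ≤ infRMS x := by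
  unfold infRMS
  exact le_ciSup (Set.Finite.bddAbove (Set.finite_range
    (fun i : Fin l => Real.sqrt ((1 / (d : ℝ)) * ∑ j, x i j ^ 2)))) i

lemma infRMS_nonneg {l d : ℕ} (hl : 0 < l) (x : Matrix (Fin l) (Fin d) ℝ) :
    0 ≤ infRMS x :=
  le_trans (Real.sqrt_nonneg _) (row_le_infRMS x ⟨0, hl⟩)

lemma rowL2_le {l d : ℕ} (hd : 0 < d) (x : Matrix (Fin l) (Fin d) ℝ) (i : Fin l) :
    Real.sqrt (∑ j, x i j ^ 2) ≤ Real.sqrt d * infRMS x := by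
  have hd' : (d : ℝ) ≠ 0 := Nat.cast_ne_zero.mpr hd.ne'
  have h1 : (∑ j, x i j ^ 2) = (d : ℝ) * ((1 / (d : ℝ)) * ∑ j, x i j ^ 2) := by
    field_simp
  rw [h1, Real.sqrt_mul (by positivity)]
  exact mul_le_mul_of_nonneg_left (row_le_infRMS x i) (Real.sqrt_nonneg _)

lemma abs_sum_mul_le {d : ℕ} (a b : Fin d → ℝ) :
    |∑ t, a t * b t| ≤ Real.sqrt (∑ t, a t ^ 2) * Real.sqrt (∑ t, b t ^ 2) := by
  have h := Finset.sum_mul_sq_le_sq_mul_sq Finset.univ a b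
  have h2 : |∑ t, a t * b t| = Real.sqrt ((∑ t, a t * b t) ^ 2) := (Real.sqrt_sq_eq_abs _).symm
  rw [h2, ← Real.sqrt_mul (by positivity)]
  exact Real.sqrt_le_sqrt h

-- weighted mean absolute deviation bound
lemma mad_le {l : ℕ} (a X : Fin l → ℝ) (B : ℝ) (hB : 0 ≤ B)
    (ha : ∀ m, 0 ≤ a m) (hsum : ∑ m, a m = 1) (hX : ∀ m, |X m| ≤ B) :
    ∑ m, a m * |X m - ∑ m', a m' * X m'| ≤ B := by
  set μ := ∑ m', a m' * X m'
  have key : (∑ m, a m * |X m - μ|) ^ 2 ≤ ∑ m, a m * (X m - μ) ^ 2 := by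
    have h := Finset.sum_mul_sq_le_sq_mul_sq Finset.univ
      (fun m => Real.sqrt (a m)) (fun m => Real.sqrt (a m) * |X m - μ|)
    have e1 : ∀ m : Fin l, Real.sqrt (a m) * (Real.sqrt (a m) * |X m - μ|) = a m * |X m - μ| := by
      intro m
      rw [← mul_assoc, Real.mul_self_sqrt (ha m)]
    have e2 : ∀ m : Fin l, Real.sqrt (a m) ^ 2 = a m := fun m => Real.sq_sqrt (ha m)
    have e3 : ∀ m : Fin l, (Real.sqrt (a m) * |X m - μ|) ^ 2 = a m * (X m - μ) ^ 2 := by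
      intro m
      rw [mul_pow, Real.sq_sqrt (ha m), sq_abs]
    calc (∑ m, a m * |X m - μ|) ^ 2
        = (∑ m, Real.sqrt (a m) * (Real.sqrt (a m) * |X m - μ|)) ^ 2 := by
          congr 1; exact Finset.sum_congr rfl (fun m _ => (e1 m).symm)
      _ ≤ (∑ m, Real.sqrt (a m) ^ 2) * ∑ m, (Real.sqrt (a m) * |X m - μ|) ^ 2 := h
      _ = (∑ m, a m) * ∑ m, a m * (X m - μ) ^ 2 := by
          rw [Finset.sum_congr rfl (fun m _ => e2 m), Finset.sum_congr rfl (fun m _ => e3 m)]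
      _ = ∑ m, a m * (X m - μ) ^ 2 := by rw [hsum, one_mul]
  have hvar : ∑ m, a m * (X m - μ) ^ 2 ≤ B ^ 2 := by
    have expand : ∑ m, a m * (X m - μ) ^ 2 = (∑ m, a m * X m ^ 2) - μ ^ 2 := by
      have : ∀ m : Fin l, a m * (X m - μ) ^ 2 = a m * X m ^ 2 - 2 * μ * (a m * X m) + μ ^ 2 * a m := by
        intro m; ring
      rw [Finset.sum_congr rfl (fun m _ => this m)]
      rw [Finset.sum_add_distrib, Finset.sum_sub_distrib, ← Finset.mul_sum, ← Finset.mul_sum, hsum]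
      simp only [μ]
      ring
    have hX2 : (∑ m, a m * X m ^ 2) ≤ B ^ 2 := by
      calc ∑ m, a m * X m ^ 2 ≤ ∑ m, a m * B ^ 2 := by
            apply Finset.sum_le_sum
            intro m _
            apply mul_le_mul_of_nonneg_left _ (ha m)
            calc X m ^ 2 = |X m| ^ 2 := (sq_abs _).symm
              _ ≤ B ^ 2 := by
                  apply pow_le_pow_left₀ (abs_nonneg _) (hX m) 2
        _ = B ^ 2 := by rw [← Finset.sum_mul, hsum, one_mul]
    nlinarith [sq_nonneg μ]
  have h0 : 0 ≤ ∑ m, a m * |X m - μ| :=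
    Finset.sum_nonneg (fun m _ => mul_nonneg (ha m) (abs_nonneg _))
  nlinarith

lemma row_comb {l d : ℕ} (hd : 0 < d) (b a : Fin l → ℝ) (u w : Matrix (Fin l) (Fin d) ℝ) :
    Real.sqrt ((1 / (d:ℝ)) * ∑ j, (∑ m, (b m * u m j + a m * w m j)) ^ 2) ≤
      (∑ m, |b m|) * infRMS u + (∑ m, |a m|) * infRMS w := by
  classical
  set e : (Fin d → ℝ) ≃ₗ[ℝ] EuclideanSpace ℝ (Fin d) :=
    (WithLp.linearEquiv 2 ℝ (Fin d → ℝ)).symm with he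
  have happ : ∀ (f : Fin d → ℝ) (j : Fin d), e f j = f j := fun f j => rfl
  have hnorm : ∀ f : Fin d → ℝ, ‖e f‖ = Real.sqrt (∑ j, f j ^ 2) := by
    intro f
    rw [EuclideanSpace.norm_eq]
    congr 1
    exact Finset.sum_congr rfl fun j _ => by rw [happ, Real.norm_eq_abs, sq_abs]
  have hy : e (fun j => ∑ m, (b m * u m j + a m * w m j)) =
      ∑ m, (b m • e (fun j => u m j) + a m • e (fun j => w m j)) := by
    have : (fun j => ∑ m, (b m * u m j + a m * w m j)) =
        ∑ m, (b m • (fun j => u m j) + a m • (fun j => w m j)) := by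
      funext j
      simp [Finset.sum_apply]
    rw [this, map_sum]
    exact Finset.sum_congr rfl fun m _ => by rw [map_add, _root_.map_smul, _root_.map_smul]
  have hnbound : ‖e (fun j => ∑ m, (b m * u m j + a m * w m j))‖ ≤
      Real.sqrt d * ((∑ m, |b m|) * infRMS u + (∑ m, |a m|) * infRMS w) := by
    rw [hy]
    calc ‖∑ m, (b m • e (fun j => u m j) + a m • e (fun j => w m j))‖
        ≤ ∑ m, ‖b m • e (fun j => u m j) + a m • e (fun j => w m j)‖ := norm_sum_le _ _
      _ ≤ ∑ m, (|b m| * (Real.sqrt d * infRMS u) + |a m| * (Real.sqrt d * infRMS w)) := by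
          apply Finset.sum_le_sum
          intro m _
          calc ‖b m • e (fun j => u m j) + a m • e (fun j => w m j)‖
              ≤ ‖b m • e (fun j => u m j)‖ + ‖a m • e (fun j => w m j)‖ := norm_add_le _ _
            _ = |b m| * ‖e (fun j => u m j)‖ + |a m| * ‖e (fun j => w m j)‖ := by
                rw [norm_smul, norm_smul, Real.norm_eq_abs, Real.norm_eq_abs]
            _ ≤ |b m| * (Real.sqrt d * infRMS u) + |a m| * (Real.sqrt d * infRMS w) := by
                apply add_le_add
                · apply mul_le_mul_of_nonneg_left _ (abs_nonneg _)
                  rw [hnorm]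
                  exact rowL2_le hd u m
                · apply mul_le_mul_of_nonneg_left _ (abs_nonneg _)
                  rw [hnorm]
                  exact rowL2_le hd w m
      _ = Real.sqrt d * ((∑ m, |b m|) * infRMS u + (∑ m, |a m|) * infRMS w) := by
          rw [Finset.sum_add_distrib, ← Finset.sum_mul, ← Finset.sum_mul]
          ring
  have hd' : (0:ℝ) < (d:ℝ) := Nat.cast_pos.mpr hd
  have hsplit : Real.sqrt ((1 / (d:ℝ)) * ∑ j, (∑ m, (b m * u m j + a m * w m j)) ^ 2) =
      Real.sqrt (1 / (d:ℝ)) * ‖e (fun j => ∑ m, (b m * u m j + a m * w m j))‖ := by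
    rw [hnorm, Real.sqrt_mul (by positivity)]
  rw [hsplit]
  calc Real.sqrt (1 / (d:ℝ)) * ‖e (fun j => ∑ m, (b m * u m j + a m * w m j))‖
      ≤ Real.sqrt (1 / (d:ℝ)) * (Real.sqrt d * ((∑ m, |b m|) * infRMS u + (∑ m, |a m|) * infRMS w)) :=
        mul_le_mul_of_nonneg_left hnbound (Real.sqrt_nonneg _)
    _ = (∑ m, |b m|) * infRMS u + (∑ m, |a m|) * infRMS w := by
        rw [← mul_assoc, ← Real.sqrt_mul (by positivity)]
        rw [show (1 / (d:ℝ)) * d = 1 by field_simp]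
        simp

lemma Sd_bound {l dQ : ℕ} (hl : 0 < l) (hdQ : 0 < dQ)
    (q k Δq Δk : Matrix (Fin l) (Fin dQ) ℝ) (hq : infRMS q ≤ 1) (hk : infRMS k ≤ 1)
    (i m : Fin l) :
    |Sd q k Δq Δk i m| ≤ infRMS Δq + infRMS Δk := by
  have hΔq0 := infRMS_nonneg hl Δq
  have hΔk0 := infRMS_nonneg hl Δk
  have hss : Real.sqrt (dQ:ℝ) * Real.sqrt (dQ:ℝ) = (dQ:ℝ) := Real.mul_self_sqrt (by positivity)
  have h1 : |∑ t, Δq i t * k m t| ≤ (dQ:ℝ) * infRMS Δq := by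
    calc |∑ t, Δq i t * k m t|
        ≤ Real.sqrt (∑ t, Δq i t ^ 2) * Real.sqrt (∑ t, k m t ^ 2) := abs_sum_mul_le _ _
      _ ≤ (Real.sqrt dQ * infRMS Δq) * (Real.sqrt dQ * infRMS k) := by
          apply mul_le_mul (rowL2_le hdQ Δq i) (rowL2_le hdQ k m) (Real.sqrt_nonneg _)
          exact mul_nonneg (Real.sqrt_nonneg _) hΔq0
      _ ≤ (Real.sqrt dQ * infRMS Δq) * (Real.sqrt dQ * 1) := by
          apply mul_le_mul_of_nonneg_left _ (mul_nonneg (Real.sqrt_nonneg _) hΔq0)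
          exact mul_le_mul_of_nonneg_left hk (Real.sqrt_nonneg _)
      _ = (Real.sqrt dQ * Real.sqrt dQ) * infRMS Δq := by ring
      _ = (dQ:ℝ) * infRMS Δq := by rw [hss]
  have h2 : |∑ t, q i t * Δk m t| ≤ (dQ:ℝ) * infRMS Δk := by
    calc |∑ t, q i t * Δk m t|
        ≤ Real.sqrt (∑ t, q i t ^ 2) * Real.sqrt (∑ t, Δk m t ^ 2) := abs_sum_mul_le _ _
      _ ≤ (Real.sqrt dQ * 1) * (Real.sqrt dQ * infRMS Δk) := by
          apply mul_le_mul
          · calc Real.sqrt (∑ t, q i t ^ 2) ≤ Real.sqrt dQ * infRMS q := rowL2_le hdQ q i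
              _ ≤ Real.sqrt dQ * 1 := mul_le_mul_of_nonneg_left hq (Real.sqrt_nonneg _)
          · exact rowL2_le hdQ Δk m
          · exact Real.sqrt_nonneg _
          · exact mul_nonneg (Real.sqrt_nonneg _) (by norm_num)
      _ = (Real.sqrt dQ * Real.sqrt dQ) * infRMS Δk := by ring
      _ = (dQ:ℝ) * infRMS Δk := by rw [hss]
  have hdQ' : (0:ℝ) < (dQ:ℝ) := Nat.cast_pos.mpr hdQ
  unfold Sd
  rw [Finset.sum_add_distrib, abs_mul, abs_of_pos (by positivity : (0:ℝ) < 1 / (dQ:ℝ))]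
  calc (1 / (dQ:ℝ)) * |(∑ t, Δq i t * k m t) + ∑ t, q i t * Δk m t|
      ≤ (1 / (dQ:ℝ)) * (|∑ t, Δq i t * k m t| + |∑ t, q i t * Δk m t|) :=
        mul_le_mul_of_nonneg_left (abs_add_le _ _) (by positivity)
    _ ≤ (1 / (dQ:ℝ)) * ((dQ:ℝ) * infRMS Δq + (dQ:ℝ) * infRMS Δk) :=
        mul_le_mul_of_nonneg_left (add_le_add h1 h2) (by positivity)
    _ = infRMS Δq + infRMS Δk := by field_simp

lemma Aw_nonneg {l dQ : ℕ} (M : Matrix (Fin l) (Fin l) ℝ)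
    (q k : Matrix (Fin l) (Fin dQ) ℝ) (i m : Fin l) : 0 ≤ Aw M q k i m := by
  unfold Aw
  positivity

lemma Aw_sum {l dQ : ℕ} (hl : 0 < l) (M : Matrix (Fin l) (Fin l) ℝ)
    (q k : Matrix (Fin l) (Fin dQ) ℝ) (i : Fin l) : ∑ m, Aw M q k i m = 1 := by
  have : Nonempty (Fin l) := ⟨⟨0, hl⟩⟩
  unfold Aw
  rw [← Finset.sum_div]
  exact div_self (ne_of_gt (Finset.sum_pos (fun _ _ => Real.exp_pos _) Finset.univ_nonempty))


/-- If `‖q‖_{∞RMS} ≤ 1`, `‖k‖_{∞RMS} ≤ 1`, `‖v‖_{∞RMS} ≤ 1`,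
then the Fréchet derivative of functional attention
`F(q,k,v) = softmax((1/d_Q)·q·kᵀ + M)·v` at `(q, k, v)` satisfies
`‖∇F(q,k,v)·(Δq,Δk,Δv)‖_{∞RMS} ≤ ‖Δq‖_{∞RMS} + ‖Δk‖_{∞RMS} + ‖Δv‖_{∞RMS}` for
every perturbation: functional attention with `1/d_Q` scaling is 1-Lipschitz
(w.r.t. the sum of the input perturbation norms) when all input norms are at
most 1. -/
theorem functional_attention_one_lipschitz
    (l dQ dV : ℕ) (hl : 0 < l) (hdQ : 0 < dQ) (hdV : 0 < dV)
    (M : Matrix (Fin l) (Fin l) ℝ)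
    (q k : Matrix (Fin l) (Fin dQ) ℝ) (v : Matrix (Fin l) (Fin dV) ℝ)
    (hq : infRMS q ≤ 1) (hk : infRMS k ≤ 1) (hv : infRMS v ≤ 1) :
    ∀ (Δq Δk : Matrix (Fin l) (Fin dQ) ℝ) (Δv : Matrix (Fin l) (Fin dV) ℝ),
      infRMS (fderiv ℝ (attnF M) (q, k, v) (Δq, Δk, Δv)) ≤
        infRMS Δq + infRMS Δk + infRMS Δv := by
  intro Δq Δk Δv
  have hB0 : 0 ≤ infRMS Δq + infRMS Δk :=
    add_nonneg (infRMS_nonneg hl Δq) (infRMS_nonneg hl Δk)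
  have hv0 := infRMS_nonneg hl v
  have hΔv0 := infRMS_nonneg hl Δv
  have : Nonempty (Fin l) := ⟨⟨0, hl⟩⟩
  unfold infRMS
  apply ciSup_le
  intro i
  have hrw : ∑ j, (fderiv ℝ (attnF M) (q, k, v) (Δq, Δk, Δv) i j) ^ 2 =
      ∑ j, (Gd M q k v Δq Δk Δv i j) ^ 2 :=
    Finset.sum_congr rfl fun j _ => by rw [fderiv_attnF_apply hl]
  rw [hrw]
  have hcomb := row_comb hdV
    (fun m => Aw M q k i m * (Sd q k Δq Δk i m - ∑ m', Aw M q k i m' * Sd q k Δq Δk i m'))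
    (fun m => Aw M q k i m) v Δv
  calc Real.sqrt ((1 / (dV:ℝ)) * ∑ j, (Gd M q k v Δq Δk Δv i j) ^ 2)
      ≤ (∑ m, |Aw M q k i m * (Sd q k Δq Δk i m - ∑ m', Aw M q k i m' * Sd q k Δq Δk i m')|) * infRMS v
        + (∑ m, |Aw M q k i m|) * infRMS Δv := by
        have : ∀ j : Fin dV, Gd M q k v Δq Δk Δv i j =
            ∑ m, ((Aw M q k i m * (Sd q k Δq Δk i m - ∑ m', Aw M q k i m' * Sd q k Δq Δk i m')) * v m j
              + (Aw M q k i m) * Δv m j) := fun j => rfl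
        simp only [this]
        exact hcomb
    _ ≤ (infRMS Δq + infRMS Δk) * infRMS v + 1 * infRMS Δv := by
        apply add_le_add
        · apply mul_le_mul _ le_rfl hv0 hB0
          have habs : ∀ m : Fin l,
              |Aw M q k i m * (Sd q k Δq Δk i m - ∑ m', Aw M q k i m' * Sd q k Δq Δk i m')| =
              Aw M q k i m * |Sd q k Δq Δk i m - ∑ m', Aw M q k i m' * Sd q k Δq Δk i m'| := by
            intro m
            rw [abs_mul, abs_of_nonneg (Aw_nonneg M q k i m)]
          rw [Finset.sum_congr rfl (fun m _ => habs m)]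
          exact mad_le (fun m => Aw M q k i m) (fun m => Sd q k Δq Δk i m) _ hB0
            (Aw_nonneg M q k i) (Aw_sum hl M q k i)
            (fun m => Sd_bound hl hdQ q k Δq Δk hq hk i m)
        · apply mul_le_mul_of_nonneg_right _ hΔv0
          rw [Finset.sum_congr rfl (fun m _ => abs_of_nonneg (Aw_nonneg M q k i m))]
          exact le_of_eq (Aw_sum hl M q k i)
    _ ≤ (infRMS Δq + infRMS Δk) * 1 + 1 * infRMS Δv :=
        add_le_add (mul_le_mul_of_nonneg_left hv hB0) le_rfl
    _ = infRMS Δq + infRMS Δk + infRMS Δv := by ring
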